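/- Let y₁,…,yₙ be reals with yⱼ ≥ 1 for each j, and define F : ℤⁿ → ℝ by F(x) = Πⱼ T_{|xⱼ|}(yⱼ), where T is the Chebyshev polynomial of the first kind extended to nonnegative indices via absolute value. Then for each j, F(x + eⱼ) + F(x − eⱼ) = 2yⱼ·F(x) for all x ∈ ℤⁿ. Consequently, if Σⱼ 2yⱼ = m² + 2n, then F solves the discretized Klein–Gordon equation (ΔF)(x) = m²·F(x), where (ΔF)(x) = Σⱼ(F(x+eⱼ)+F(x−eⱼ)−2F(x)). -/
import Mathlib

open Polynomial.Chebyshev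

private lemma Tabs_eq (a : ℤ) : Polynomial.Chebyshev.T ℝ (a.natAbs) = Polynomial.Chebyshev.T ℝ a := by
  rcases Int.natAbs_eq a with h | h
  · rw [← h]
  · rw [show ((a.natAbs : ℤ)) = -a by omega, T_neg]

private lemma cheb_step (a : ℤ) (c : ℝ) :
    (Polynomial.Chebyshev.T ℝ (a + 1)).eval c + (Polynomial.Chebyshev.T ℝ (a - 1)).eval c
      = 2 * c * (Polynomial.Chebyshev.T ℝ a).eval c := by
  have h := T_add_two ℝ (a - 1)
  have h2 : Polynomial.Chebyshev.T ℝ (a + 1)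
      = 2 * Polynomial.X * Polynomial.Chebyshev.T ℝ a - Polynomial.Chebyshev.T ℝ (a - 1) := by
    have : a - 1 + 2 = a + 1 := by ring
    have : a - 1 + 1 = a := by ring
    simpa [show a - 1 + 2 = a + 1 by ring, show a - 1 + 1 = a by ring] using h
  rw [h2]
  simp [Polynomial.eval_mul]

theorem chebyshev_product_solves_klein_gordon (n : ℕ) (y : Fin n → ℝ)
    (hy : ∀ j, 1 ≤ y j) (m : ℝ)
    (F : (Fin n → ℤ) → ℝ)
    (hF : ∀ x, F x = ∏ j : Fin n, (Polynomial.Chebyshev.T ℝ ((x j).natAbs)).eval (y j)) :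
    (∀ j : Fin n, ∀ x : Fin n → ℤ,
      F (x + Pi.single j 1) + F (x - Pi.single j 1) = 2 * y j * F x) ∧
    ((∑ j : Fin n, 2 * y j) = m ^ 2 + 2 * n →
      ∀ x : Fin n → ℤ,
        (∑ j : Fin n, (F (x + Pi.single j 1) + F (x - Pi.single j 1) - 2 * F x))
          = m ^ 2 * F x) := by
  have hF' : ∀ x, F x = ∏ j : Fin n, (Polynomial.Chebyshev.T ℝ (x j)).eval (y j) := by
    intro x
    rw [hF]
    exact Finset.prod_congr rfl fun j _ => by rw [Tabs_eq]
  have key : ∀ j : Fin n, ∀ x : Fin n → ℤ,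
      F (x + Pi.single j 1) + F (x - Pi.single j 1) = 2 * y j * F x := by
    intro j x
    rw [hF', hF', hF']
    rw [Fintype.prod_eq_mul_prod_compl j, Fintype.prod_eq_mul_prod_compl j,
      Fintype.prod_eq_mul_prod_compl j]
    have hrest : ∀ z : Fin n → ℤ, (∀ i, i ≠ j → z i = x i) →
        (∏ i ∈ {j}ᶜ, (Polynomial.Chebyshev.T ℝ (z i)).eval (y i))
          = ∏ i ∈ {j}ᶜ, (Polynomial.Chebyshev.T ℝ (x i)).eval (y i) := by
      intro z hz
      refine Finset.prod_congr rfl fun i hi => ?_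
      rw [hz i (by simpa using hi)]
    have e1 := hrest ((x + Pi.single j 1 : Fin n → ℤ)) (fun i hi => by simp [Pi.single_eq_of_ne hi])
    have e2 := hrest ((x - Pi.single j 1 : Fin n → ℤ)) (fun i hi => by simp [Pi.single_eq_of_ne hi])
    rw [e1, e2]
    have h1 : (x + Pi.single j 1 : Fin n → ℤ) j = x j + 1 := by simp
    have h2 : (x - Pi.single j 1 : Fin n → ℤ) j = x j - 1 := by simp
    rw [h1, h2, ← add_mul, cheb_step]
    ring
  refine ⟨key, fun hsum x => ?_⟩
  have : (∑ j : Fin n, (F (x + Pi.single j 1) + F (x - Pi.single j 1) - 2 * F x))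
      = ∑ j : Fin n, (2 * y j * F x - 2 * F x) := by
    refine Finset.sum_congr rfl fun j _ => by rw [key j x]
  rw [this]
  have : ∑ j : Fin n, (2 * y j * F x - 2 * F x)
      = (∑ j : Fin n, 2 * y j) * F x - 2 * n * F x := by
    rw [Finset.sum_sub_distrib, ← Finset.sum_mul]
    simp [mul_comm]
    ring
  rw [this, hsum]
  ring
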